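/- Let M be an n×n symmetric matrix over 𝔽₂ of full rank n. Then there is at most one n×n upper-triangular matrix U over 𝔽₂ with UᵀU = M; i.e., if UᵀU = VᵀV = M with U, V upper-triangular, then U = V. -/

import Mathlib

open Matrix

lemma isUnit_of_rank_eq {n : ℕ} (M : Matrix (Fin n) (Fin n) (ZMod 2))
    (hrank : M.rank = n) : IsUnit M := by
  rw [← Matrix.mulVec_surjective_iff_isUnit]
  have : LinearMap.range M.mulVecLin = ⊤ := by
    apply Submodule.eq_top_of_finrank_eq
    rw [← Matrix.rank, hrank]
    simp
  exact LinearMap.range_eq_top.mp this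

/-- If `M` is an `n × n` symmetric matrix over `𝔽₂` of full rank `n`, then
`M` has at most one upper-triangular Cholesky root: if `UᵀU = VᵀV = M` with `U, V`
upper-triangular, then `U = V`. -/
theorem stmt_14 (n : ℕ) (M : Matrix (Fin n) (Fin n) (ZMod 2)) (hM : M.IsSymm)
    (hrank : M.rank = n) (U V : Matrix (Fin n) (Fin n) (ZMod 2))
    (hU : U.BlockTriangular id) (hV : V.BlockTriangular id)
    (hUM : Uᵀ * U = M) (hVM : Vᵀ * V = M) : U = V := by
  have hMu : IsUnit M := isUnit_of_rank_eq M hrank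
  have hMd : IsUnit M.det := (Matrix.isUnit_iff_isUnit_det M).mp hMu
  have hUd : IsUnit U.det := by
    have : U.det * U.det = M.det := by
      rw [← hUM, Matrix.det_mul, Matrix.det_transpose]
    exact isUnit_of_mul_isUnit_left (this ▸ hMd)
  have hVd : IsUnit V.det := by
    have : V.det * V.det = M.det := by
      rw [← hVM, Matrix.det_mul, Matrix.det_transpose]
    exact isUnit_of_mul_isUnit_left (this ▸ hMd)
  haveI : Invertible U := U.invertibleOfIsUnitDet hUd
  haveI : Invertible V := V.invertibleOfIsUnitDet hVd
  set W := V * U⁻¹ with hWdef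
  have hWW : Wᵀ * W = 1 := by
    have h1 : Wᵀ * W = (U⁻¹)ᵀ * (Vᵀ * V) * U⁻¹ := by
      rw [hWdef, Matrix.transpose_mul]
      simp [Matrix.mul_assoc]
    rw [h1, hVM, ← hUM, ← Matrix.mul_assoc, Matrix.transpose_nonsing_inv,
      Matrix.nonsing_inv_mul _ (by rwa [Matrix.det_transpose]), Matrix.one_mul,
      Matrix.mul_nonsing_inv _ hUd]
  haveI : Invertible W := invertibleOfLeftInverse W Wᵀ hWW
  have hWt : W.BlockTriangular id :=
    hV.mul (Matrix.blockTriangular_inv_of_blockTriangular hU)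
  have hWtinv : Wᵀ = W⁻¹ := by
    rw [Matrix.inv_eq_left_inv hWW]
  have hWlt : (Wᵀ).BlockTriangular id := by
    rw [hWtinv]
    exact Matrix.blockTriangular_inv_of_blockTriangular hWt
  -- W is diagonal
  have hdiag : ∀ i j, i ≠ j → W i j = 0 := by
    intro i j hij
    rcases lt_or_gt_of_ne hij with h | h
    · have := hWlt (show (id i : Fin n) < id j from h)
      simpa using this
    · exact hWt h
  have hWone : W = 1 := by
    ext i j
    by_cases hij : i = j
    · subst hij
      have hsq := congrFun (congrFun hWW i) i
      simp only [Matrix.mul_apply, Matrix.transpose_apply, Matrix.one_apply_eq] at hsq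
      have h2 : (∑ k, W k i * W k i) = W i i * W i i := by
        apply Finset.sum_eq_single
        · intro k _ hk
          rw [hdiag k i hk]; ring
        · intro h; exact absurd (Finset.mem_univ i) h
      rw [h2] at hsq
      have hx : W i i = 1 := by
        have h3 : ∀ x : ZMod 2, x * x = 1 → x = 1 := by decide
        exact h3 _ hsq
      simp [hx]
    · rw [hdiag i j hij, Matrix.one_apply_ne hij]
  have : V = W * U := by
    rw [hWdef, Matrix.mul_assoc, Matrix.nonsing_inv_mul _ hUd, Matrix.mul_one]
  rw [this, hWone, Matrix.one_mul]
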